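/- Let K be a complex Hilbert space and let A, B be bounded positive operators on K. Then the square of the Hilbert-Schmidt norm of A^{1/2} - B^{1/2} is bounded by the trace norm of A - B: ‖A^{1/2} - B^{1/2}‖₂² ≤ ‖A - B‖₁. -/

import Mathlib

open scoped ENNReal InnerProductSpace

set_option maxHeartbeats 3000000
set_option synthInstance.maxHeartbeats 200000

/-- The (squared) Hilbert–Schmidt norm of an operator, computed in a Hilbert basis
(as a value in `ℝ≥0∞`; it is independent of the basis). -/
noncomputable def hsNormSq {K : Type*} [NormedAddCommGroup K] [InnerProductSpace ℂ K]
    {ι : Type*} (b : HilbertBasis ι ℂ K) (T : K →L[ℂ] K) : ℝ≥0∞ :=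
  ∑' i, ENNReal.ofReal (‖T (b i)‖ ^ 2)

/-- The trace of a (positive) operator, computed in a Hilbert basis
(as a value in `ℝ≥0∞`; for positive operators it is independent of the basis). -/
noncomputable def traceVia {K : Type*} [NormedAddCommGroup K] [InnerProductSpace ℂ K]
    {ι : Type*} (b : HilbertBasis ι ℂ K) (T : K →L[ℂ] K) : ℝ≥0∞ :=
  ∑' i, ENNReal.ofReal (⟪b i, T (b i)⟫_ℂ).re

section Helpers

variable {K : Type*} [NormedAddCommGroup K] [InnerProductSpace ℂ K] [CompleteSpace K]
variable {ι κ : Type*}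

namespace PS

lemma reInner_nonneg {T : K →L[ℂ] K} (hT : 0 ≤ T) (x : K) : 0 ≤ (⟪x, T x⟫_ℂ).re := by
  have := ((ContinuousLinearMap.nonneg_iff_isPositive T).mp hT).inner_nonneg_right x
  exact (Complex.nonneg_iff.mp this).1

lemma reInner_le {T₁ T₂ : K →L[ℂ] K} (h : T₁ ≤ T₂) (x : K) :
    (⟪x, T₁ x⟫_ℂ).re ≤ (⟪x, T₂ x⟫_ℂ).re := by
  have h0 : (0:K →L[ℂ] K) ≤ T₂ - T₁ := sub_nonneg.mpr h
  have := reInner_nonneg h0 x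
  rw [ContinuousLinearMap.sub_apply, inner_sub_right] at this
  simp only [Complex.sub_re] at this
  linarith

lemma traceVia_mono {T₁ T₂ : K →L[ℂ] K} (b : HilbertBasis ι ℂ K) (h : T₁ ≤ T₂) :
    traceVia b T₁ ≤ traceVia b T₂ :=
  ENNReal.tsum_le_tsum fun i => ENNReal.ofReal_le_ofReal (reInner_le h (b i))

lemma traceVia_add (b : HilbertBasis ι ℂ K) {T₁ T₂ : K →L[ℂ] K}
    (h₁ : 0 ≤ T₁) (h₂ : 0 ≤ T₂) :
    traceVia b (T₁ + T₂) = traceVia b T₁ + traceVia b T₂ := by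
  simp only [traceVia]
  rw [← ENNReal.tsum_add]
  refine tsum_congr fun i => ?_
  rw [ContinuousLinearMap.add_apply, inner_add_right, Complex.add_re,
    ENNReal.ofReal_add (reInner_nonneg h₁ _) (reInner_nonneg h₂ _)]

lemma reInner_star_mul_self (x : K →L[ℂ] K) (v : K) :
    (⟪v, (star x * x) v⟫_ℂ).re = ‖x v‖ ^ 2 := by
  have h1 : (star x * x) v = (ContinuousLinearMap.adjoint x) (x v) := by
    rw [ContinuousLinearMap.star_eq_adjoint]; rfl
  rw [h1, ContinuousLinearMap.adjoint_inner_right]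
  have := inner_self_eq_norm_sq (𝕜 := ℂ) (x v)
  rw [← this]
  rfl

lemma traceVia_star_mul_self (b : HilbertBasis ι ℂ K) (x : K →L[ℂ] K) :
    traceVia b (star x * x) = hsNormSq b x :=
  tsum_congr fun i => by rw [reInner_star_mul_self]

lemma hsNormSq_double (b : HilbertBasis ι ℂ K) (c : HilbertBasis κ ℂ K) (x : K →L[ℂ] K) :
    hsNormSq b x = ∑' i, ∑' j, ENNReal.ofReal (‖⟪c j, x (b i)⟫_ℂ‖ ^ 2) := by
  refine tsum_congr fun i => ?_
  set v := x (b i) with hv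
  have h : HasSum (fun j => ⟪v, c j⟫_ℂ * ⟪c j, v⟫_ℂ) ⟪v, v⟫_ℂ :=
    c.hasSum_inner_mul_inner v v
  have h2 : HasSum (fun j => (⟪v, c j⟫_ℂ * ⟪c j, v⟫_ℂ).re) (⟪v, v⟫_ℂ).re :=
    h.mapL Complex.reCLM
  have h3 : ∀ j, (⟪v, c j⟫_ℂ * ⟪c j, v⟫_ℂ).re = ‖⟪c j, v⟫_ℂ‖ ^ 2 := by
    intro j
    rw [← inner_conj_symm v (c j), Complex.conj_mul', ← Complex.ofReal_pow,
      Complex.ofReal_re]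
  have h4 : (‖v‖ ^ 2 : ℝ) = (⟪v, v⟫_ℂ).re := by
    rw [← inner_self_eq_norm_sq (𝕜 := ℂ) v]; rfl
  rw [h4, ← h2.tsum_eq,
    ENNReal.ofReal_tsum_of_nonneg (fun j => by rw [h3 j]; positivity) h2.summable]
  exact tsum_congr fun j => by rw [h3 j]

lemma hsNormSq_star (b : HilbertBasis ι ℂ K) (c : HilbertBasis κ ℂ K) (x : K →L[ℂ] K) :
    hsNormSq b (star x) = hsNormSq c x := by
  rw [hsNormSq_double b c (star x), hsNormSq_double c b x, ENNReal.tsum_comm]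
  refine tsum_congr fun i => tsum_congr fun j => ?_
  congr 2
  rw [ContinuousLinearMap.star_eq_adjoint, ContinuousLinearMap.adjoint_inner_right,
    ← norm_inner_symm]

lemma hsNormSq_basis (b : HilbertBasis ι ℂ K) (c : HilbertBasis κ ℂ K) (x : K →L[ℂ] K) :
    hsNormSq b x = hsNormSq c x :=
  calc hsNormSq b x = hsNormSq b (star (star x)) := by rw [star_star]
  _ = hsNormSq c (star x) := hsNormSq_star b c (star x)
  _ = hsNormSq c x := hsNormSq_star c c x

/-- `Tr(star y * y) = Tr (y * star y)`, the key swap move. -/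
lemma traceVia_swap (b : HilbertBasis ι ℂ K) (y : K →L[ℂ] K) :
    traceVia b (star y * y) = traceVia b (y * star y) := by
  rw [traceVia_star_mul_self b y]
  have : traceVia b (y * star y) = hsNormSq b (star y) := by
    conv_lhs => rw [show y * star y = star (star y) * star y by rw [star_star]]
    exact traceVia_star_mul_self b (star y)
  rw [this, hsNormSq_star b b y]

lemma traceVia_basis {T : K →L[ℂ] K} (hT : 0 ≤ T)
    (b : HilbertBasis ι ℂ K) (c : HilbertBasis κ ℂ K) :
    traceVia b T = traceVia c T := by
  have hs : star (CFC.sqrt T) * CFC.sqrt T = T := by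
    rw [(IsSelfAdjoint.of_nonneg (CFC.sqrt_nonneg T)).star_eq]
    exact CFC.sqrt_mul_sqrt_self T hT
  rw [← hs, traceVia_star_mul_self b _, traceVia_star_mul_self c _,
    hsNormSq_basis b c]

lemma hsNormSq_comp_le (b : HilbertBasis ι ℂ K) (x C : K →L[ℂ] K) :
    hsNormSq b (x * C) ≤ ENNReal.ofReal (‖C‖ ^ 2) * hsNormSq b x := by
  rw [hsNormSq_basis b b (x * C), ← hsNormSq_star b b (x * C), star_mul]
  rw [← hsNormSq_star b b x]
  rw [hsNormSq, hsNormSq, ← ENNReal.tsum_mul_left]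
  refine ENNReal.tsum_le_tsum fun i => ?_
  rw [← ENNReal.ofReal_mul (by positivity)]
  refine ENNReal.ofReal_le_ofReal ?_
  have h1 : ‖(star C * star x) (b i)‖ ≤ ‖C‖ * ‖star x (b i)‖ := by
    calc ‖star C (star x (b i))‖ ≤ ‖star C‖ * ‖star x (b i)‖ :=
          (star C).le_opNorm _
    _ = ‖C‖ * ‖star x (b i)‖ := by rw [norm_star]
  calc ‖(star C * star x) (b i)‖ ^ 2 ≤ (‖C‖ * ‖star x (b i)‖) ^ 2 := by
        have h0 : (0:ℝ) ≤ ‖(star C * star x) (b i)‖ := norm_nonneg _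
        nlinarith [h1]
  _ = ‖C‖ ^ 2 * ‖star x (b i)‖ ^ 2 := by ring

/-- `Tr(star C * T * C) ≤ ‖C‖² Tr T` for `T ≥ 0`. -/
lemma traceVia_conj_le (b : HilbertBasis ι ℂ K) {T : K →L[ℂ] K} (hT : 0 ≤ T)
    (C : K →L[ℂ] K) :
    traceVia b (star C * T * C) ≤ ENNReal.ofReal (‖C‖ ^ 2) * traceVia b T := by
  have hs : star (CFC.sqrt T) * CFC.sqrt T = T := by
    rw [(IsSelfAdjoint.of_nonneg (CFC.sqrt_nonneg T)).star_eq]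
    exact CFC.sqrt_mul_sqrt_self T hT
  have h1 : star C * T * C = star (CFC.sqrt T * C) * (CFC.sqrt T * C) := by
    rw [star_mul]
    conv_lhs => rw [← hs]
    noncomm_ring
  rw [h1, traceVia_star_mul_self b _]
  refine (hsNormSq_comp_le b (CFC.sqrt T) C).trans ?_
  rw [← traceVia_star_mul_self b (CFC.sqrt T), hs]

lemma traceVia_sandwich (b : HilbertBasis ι ℂ K) {T : K →L[ℂ] K} (hT : 0 ≤ T)
    (C : K →L[ℂ] K) :
    traceVia b (star C * T * C) = traceVia b (CFC.sqrt T * (C * star C) * CFC.sqrt T) := by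
  have hsa : star (CFC.sqrt T) = CFC.sqrt T := (IsSelfAdjoint.of_nonneg (CFC.sqrt_nonneg T)).star_eq
  have hs : CFC.sqrt T * CFC.sqrt T = T := CFC.sqrt_mul_sqrt_self T hT
  have h1 : star C * T * C = star (CFC.sqrt T * C) * (CFC.sqrt T * C) := by
    rw [star_mul, hsa]
    conv_lhs => rw [← hs]
    noncomm_ring
  have h2 : (CFC.sqrt T * C) * star (CFC.sqrt T * C)
      = CFC.sqrt T * (C * star C) * CFC.sqrt T := by
    rw [star_mul, hsa]; noncomm_ring
  rw [h1, traceVia_swap, h2]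

lemma traceVia_smul (b : HilbertBasis ι ℂ K) {T : K →L[ℂ] K} {r : ℝ} (hr : 0 ≤ r) :
    traceVia b (r • T) = ENNReal.ofReal r * traceVia b T := by
  rw [traceVia, traceVia, ← ENNReal.tsum_mul_left]
  refine tsum_congr fun i => ?_
  have h1 : (r • T) (b i) = (r : ℂ) • (T (b i)) := by
    rw [ContinuousLinearMap.smul_apply, RCLike.real_smul_eq_coe_smul (K := ℂ)]
    rfl
  rw [h1, inner_smul_right]
  have h2 : ((r : ℂ) * ⟪b i, T (b i)⟫_ℂ).re = r * (⟪b i, T (b i)⟫_ℂ).re := by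
    simp [Complex.mul_re]
  rw [h2, ENNReal.ofReal_mul hr]

lemma sum_le_toReal (b : HilbertBasis ι ℂ K) {T : K →L[ℂ] K} (hT : 0 ≤ T)
    {X : ℝ≥0∞} (hle : traceVia b T ≤ X) (hfin : X ≠ ⊤) (F : Finset ι) :
    ∑ i ∈ F, (⟪b i, T (b i)⟫_ℂ).re ≤ X.toReal := by
  rw [← ENNReal.ofReal_le_iff_le_toReal hfin]
  rw [ENNReal.ofReal_sum_of_nonneg (fun i _ => reInner_nonneg hT _)]
  exact le_trans (ENNReal.sum_le_tsum F) hle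

lemma le_iSup_traceVia (b : HilbertBasis ι ℂ K) {R : ℕ → K →L[ℂ] K} {T : K →L[ℂ] K}
    (hmono : ∀ n, R n ≤ R (n + 1))
    (hconv : ∀ x : K, Filter.Tendsto (fun n => (⟪x, R n x⟫_ℂ).re) Filter.atTop
      (nhds (⟪x, T x⟫_ℂ).re)) :
    traceVia b T ≤ ⨆ n, traceVia b (R n) := by
  have hmono' : ∀ i : ι, Monotone (fun n => ENNReal.ofReal ((⟪b i, R n (b i)⟫_ℂ).re)) := by
    intro i
    refine monotone_nat_of_le_succ fun n => ?_
    exact ENNReal.ofReal_le_ofReal (reInner_le (hmono n) _)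
  have hterm : ∀ i : ι, ENNReal.ofReal ((⟪b i, T (b i)⟫_ℂ).re)
      = ⨆ n, ENNReal.ofReal ((⟪b i, R n (b i)⟫_ℂ).re) := by
    intro i
    refine le_antisymm ?_ (iSup_le fun n => ?_)
    · have h2 : Filter.Tendsto (fun n => ENNReal.ofReal ((⟪b i, R n (b i)⟫_ℂ).re))
          Filter.atTop (nhds (ENNReal.ofReal ((⟪b i, T (b i)⟫_ℂ).re))) :=
        ENNReal.tendsto_ofReal (hconv (b i))
      exact le_of_tendsto' h2 fun n => le_iSup (fun m => ENNReal.ofReal ((⟪b i, R m (b i)⟫_ℂ).re)) n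
    · refine ENNReal.ofReal_le_ofReal ?_
      have hm : Monotone fun n => (⟪b i, R n (b i)⟫_ℂ).re :=
        monotone_nat_of_le_succ fun n => reInner_le (hmono n) _
      exact hm.ge_of_tendsto (hconv (b i)) n
  rw [traceVia]
  refine le_trans (le_of_eq (tsum_congr hterm)) ?_
  rw [ENNReal.tsum_eq_iSup_sum]
  refine iSup_le fun F => ?_
  rw [ENNReal.finsetSum_iSup_of_monotone hmono']
  exact iSup_mono fun n => ENNReal.sum_le_tsum F

lemma spec_abs_le {S : K →L[ℂ] K} {t : ℝ} (ht : t ∈ spectrum ℝ S) : |t| ≤ ‖S‖ := by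
  rcases subsingleton_or_nontrivial K with hK | hK
  · exfalso
    have : IsUnit (algebraMap ℝ (K →L[ℂ] K) t - S) := by
      have : Subsingleton (K →L[ℂ] K) := by
        constructor; intro f g; ext x; exact Subsingleton.elim _ _
      exact isUnit_of_subsingleton _
    exact ht this
  · haveI : NormOneClass (K →L[ℂ] K) := ⟨ContinuousLinearMap.norm_id⟩
    have h : (t : ℂ) ∈ spectrum ℂ S := by
      have := spectrum.algebraMap_mem ℂ ht
      simpa using this
    simpa using spectrum.norm_le_norm_of_mem h

lemma inner_conj_selfadj {C W : K →L[ℂ] K} (hC : IsSelfAdjoint C) (x : K) :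
    ⟪x, (C * W * C) x⟫_ℂ = ⟪C x, W (C x)⟫_ℂ := by
  have h1 : (C * W * C) x = C (W (C x)) := rfl
  rw [h1, ← ContinuousLinearMap.adjoint_inner_left C,
    ContinuousLinearMap.isSelfAdjoint_iff'.mp hC]

lemma re_inner_smul (x y : K) (r : ℝ) : (⟪x, r • y⟫_ℂ).re = r * (⟪x, y⟫_ℂ).re := by
  rw [RCLike.real_smul_eq_coe_smul (K := ℂ), inner_smul_right]
  simp [Complex.mul_re]

set_option maxHeartbeats 3000000 in
/-- The core inequality: `Tr((t·u(t))²(S)) ≤ Tr P` for a cutoff function `u`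
supported in `(δ, ∞)`, when `S*T + T*S = 2(P - N)`, `0 ≤ T`, `S ≤ T`. -/
lemma main_ineq (b : HilbertBasis ι ℂ K) (S T P N : K →L[ℂ] K)
    (hS : IsSelfAdjoint S) (hT : 0 ≤ T) (hST : S ≤ T)
    (hP : 0 ≤ P) (hN : 0 ≤ N)
    (hX : S * T + T * S + N + N = P + P)
    (hfinP : traceVia b P ≠ ⊤) (hfinN : traceVia b N ≠ ⊤)
    (u : ℝ → ℝ) (hu_cont : Continuous u) (hu0 : ∀ t, 0 ≤ u t) (hu1 : ∀ t, u t ≤ 1)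
    {δ : ℝ} (hδ : 0 < δ) (hδ1 : δ ≤ 1) (hsupp : ∀ t, t ≤ δ → u t = 0) :
    traceVia b (cfc (fun t => (t * u t) ^ 2) S) ≤ traceVia b P := by
  set M : ℝ := ‖S‖ with hM
  have hM0 : (0:ℝ) ≤ M := norm_nonneg S
  set ε : ℝ := 1 / (M + 1) with hε
  have hM1 : (0:ℝ) < M + 1 := by linarith
  have hε0 : 0 < ε := by positivity
  have hε1 : ε ≤ 1 := by rw [hε, div_le_one hM1]; linarith
  set q : ℝ := 1 - ε * δ with hq
  have hq0 : 0 ≤ q := by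
    have : ε * δ ≤ 1 * 1 := mul_le_mul hε1 hδ1 (le_of_lt hδ) zero_le_one
    simp only [hq]; linarith
  have hq1 : q < 1 := by
    have : 0 < ε * δ := mul_pos hε0 hδ
    simp only [hq]; linarith
  have hq2 : q ^ 2 < 1 := by nlinarith
  have hq20 : 0 ≤ q ^ 2 := by positivity
  -- spectrum bound
  have hspec : ∀ t ∈ spectrum ℝ S, |t| ≤ M := fun t ht => spec_abs_le ht
  -- basic operators
  set uOp : K →L[ℂ] K := cfc u S with huOp
  have husa : IsSelfAdjoint uOp := cfc_predicate u S
  have hu_norm : ‖uOp‖ ≤ 1 := by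
    refine norm_cfc_le zero_le_one fun t ht => ?_
    rw [Real.norm_eq_abs, abs_le]; exact ⟨by linarith [hu0 t], hu1 t⟩
  set Vf : ℝ → ℝ := fun t => 1 - ε * t with hVf
  have hVfc : Continuous Vf := by fun_prop
  set V : K →L[ℂ] K := cfc Vf S with hV
  have hVsa : IsSelfAdjoint V := cfc_predicate Vf S
  set Ck : ℕ → (K →L[ℂ] K) := fun k => cfc (fun t => Vf t ^ k * u t) S with hCk
  have hCkc : ∀ k, Continuous fun t => Vf t ^ k * u t := fun k => by fun_prop
  have hCksa : ∀ k, IsSelfAdjoint (Ck k) := fun k => cfc_predicate _ S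
  have hCk_bound : ∀ k, ∀ t ∈ spectrum ℝ S, |Vf t ^ k * u t| ≤ q ^ k := by
    intro k t ht
    rcases le_or_gt t δ with h | h
    · rw [hsupp t h, mul_zero, abs_zero]; exact pow_nonneg hq0 k
    · have htM : t ≤ M := le_trans (le_abs_self t) (hspec t ht)
      have h1 : 0 ≤ Vf t := by
        have : ε * t ≤ ε * M := by nlinarith
        have : ε * M < 1 := by rw [hε]; rw [div_mul_eq_mul_div, div_lt_one hM1]; linarith
        simp only [hVf]; nlinarith
      have h2 : Vf t ≤ q := by
        have : ε * δ ≤ ε * t := by nlinarith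
        simp only [hVf, hq]; linarith
      rw [abs_of_nonneg (mul_nonneg (pow_nonneg h1 k) (hu0 t))]
      calc Vf t ^ k * u t ≤ q ^ k * 1 :=
            mul_le_mul (pow_le_pow_left₀ h1 h2 k) (hu1 t) (hu0 t) (pow_nonneg hq0 k)
      _ = q ^ k := mul_one _
  have hCk_norm : ∀ k, ‖Ck k‖ ≤ q ^ k := by
    intro k
    refine norm_cfc_le (pow_nonneg hq0 k) fun t ht => ?_
    rw [Real.norm_eq_abs]; exact hCk_bound k t ht
  have hVk_mul : ∀ k, V ^ k * uOp = Ck k := by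
    intro k
    rw [hCk, ← cfc_pow Vf k S (hVfc.continuousOn), ← cfc_mul _ _ S
      (by fun_prop) (hu_cont.continuousOn)]
  -- identity T = Σ V^k (T - VTV) V^k + V^n T V^n
  have hcV : ∀ n : ℕ, V ^ n * V = V * V ^ n := fun n => by rw [← pow_succ, pow_succ']
  have hstep : ∀ n : ℕ, V ^ n * T * V ^ n
      = V ^ n * (T - V * T * V) * V ^ n + V ^ (n+1) * T * V ^ (n+1) := by
    intro n
    rw [pow_succ]
    nth_rewrite 2 [hcV n]
    noncomm_ring
  have hTsum : ∀ n : ℕ, T = (∑ k ∈ Finset.range n, V ^ k * (T - V * T * V) * V ^ k)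
      + V ^ n * T * V ^ n := by
    intro n
    induction n with
    | zero => simp
    | succ n ih =>
      rw [Finset.sum_range_succ, add_assoc, ← hstep n]
      exact ih
  -- V = 1 - ε • S and the W bound
  have hVdef : V = 1 - ε • S := by
    rw [hV, hVf]
    rw [cfc_sub _ _ S (by fun_prop) (by fun_prop)]
    rw [cfc_const_mul_id ε S, cfc_const 1 S, map_one]
  have hST2 : S * T + T * S = P + P - N - N := by rw [← hX]; abel
  have hTVTV : T - V * T * V = ε • (P + P - N - N) - (ε * ε) • (S * T * S) := by
    rw [hVdef, ← hST2]
    simp only [sub_mul, mul_sub, one_mul, mul_one, smul_mul_assoc, mul_smul_comm,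
      smul_smul, smul_add, smul_sub]
    abel
  have hW : ∀ z : K, (⟪z, (T - V * T * V) z⟫_ℂ).re
      ≤ 2 * ε * ((⟪z, P z⟫_ℂ).re + (⟪z, N z⟫_ℂ).re) := by
    intro z
    rw [hTVTV]
    have e1 : (ε • (P + P - N - N) - (ε * ε) • (S * T * S)) z
        = ε • ((P + P - N - N) z) - (ε * ε) • ((S * T * S) z) := rfl
    rw [e1, inner_sub_right, Complex.sub_re, re_inner_smul, re_inner_smul]
    have e2 : ((P + P - N - N) z) = P z + P z - N z - N z := rfl
    rw [e2]
    have e3 : (⟪z, P z + P z - N z - N z⟫_ℂ).re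
        = (⟪z, P z⟫_ℂ).re + (⟪z, P z⟫_ℂ).re - (⟪z, N z⟫_ℂ).re - (⟪z, N z⟫_ℂ).re := by
      rw [inner_sub_right, inner_sub_right, inner_add_right]
      simp [Complex.sub_re, Complex.add_re]
    rw [e3]
    have e4 : (⟪z, (S * T * S) z⟫_ℂ).re = (⟪S z, T (S z)⟫_ℂ).re := by
      rw [inner_conj_selfadj hS z]
    rw [e4]
    have h5 : 0 ≤ (⟪S z, T (S z)⟫_ℂ).re := reInner_nonneg hT (S z)
    have h6 : 0 ≤ (⟪z, N z⟫_ℂ).re := reInner_nonneg hN z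
    have h7 : 0 ≤ (⟪z, P z⟫_ℂ).re := reInner_nonneg hP z
    have h8 : 0 ≤ ε * ε := by positivity
    nlinarith [mul_le_mul_of_nonneg_left h5 h8]
  -- traces of P and N
  have hDr0 : (0:ℝ) ≤ (traceVia b P).toReal + (traceVia b N).toReal := by positivity
  set Dr : ℝ := (traceVia b P).toReal + (traceVia b N).toReal with hDrdef
  have hconj : ∀ (R : K →L[ℂ] K), 0 ≤ R → traceVia b R ≠ ⊤ → ∀ k : ℕ,
      traceVia b (star (Ck k) * R * Ck k) ≤ ENNReal.ofReal (q ^ (2 * k)) * traceVia b R := by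
    intro R hR _ k
    refine (traceVia_conj_le b hR (Ck k)).trans ?_
    refine mul_le_mul_left (ENNReal.ofReal_le_ofReal ?_) _
    calc ‖Ck k‖ ^ 2 ≤ (q ^ k) ^ 2 := by
          have := hCk_norm k; nlinarith [norm_nonneg (Ck k)]
    _ = q ^ (2 * k) := by rw [← pow_mul, mul_comm]
  have hsum_conj : ∀ (R : K →L[ℂ] K), 0 ≤ R → traceVia b R ≠ ⊤ → ∀ (k : ℕ) (F : Finset ι),
      ∑ i ∈ F, (⟪Ck k (b i), R (Ck k (b i))⟫_ℂ).re ≤ q ^ (2*k) * (traceVia b R).toReal := by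
    intro R hR hRfin k F
    have hpos : 0 ≤ star (Ck k) * R * Ck k := star_left_conjugate_nonneg hR (Ck k)
    have hXfin : ENNReal.ofReal (q ^ (2 * k)) * traceVia b R ≠ ⊤ :=
      ENNReal.mul_ne_top ENNReal.ofReal_ne_top hRfin
    have h1 := sum_le_toReal b hpos (hconj R hR hRfin k) hXfin F
    have e : ∀ i, (⟪b i, (star (Ck k) * R * Ck k) (b i)⟫_ℂ).re
        = (⟪Ck k (b i), R (Ck k (b i))⟫_ℂ).re := by
      intro i
      conv_lhs => rw [(hCksa k).star_eq]
      rw [inner_conj_selfadj (hCksa k)]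
    rw [Finset.sum_congr rfl (fun i _ => e i)] at h1
    refine h1.trans ?_
    rw [ENNReal.toReal_mul, ENNReal.toReal_ofReal (by positivity)]
  -- the  per-finset, per-n estimate
  have hterm : ∀ (n : ℕ) (i : ι), (⟪uOp (b i), T (uOp (b i))⟫_ℂ).re
      = (∑ k ∈ Finset.range n, (⟪Ck k (b i), (T - V*T*V) (Ck k (b i))⟫_ℂ).re)
        + (⟪Ck n (b i), T (Ck n (b i))⟫_ℂ).re := by
    intro n i
    conv_lhs => rw [hTsum n]
    rw [ContinuousLinearMap.add_apply, inner_add_right, Complex.add_re]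
    congr 1
    · rw [ContinuousLinearMap.sum_apply, inner_sum, Complex.re_sum]
      refine Finset.sum_congr rfl fun k _ => ?_
      rw [inner_conj_selfadj (hVsa.pow k)]
      congr 1 <;> rw [show (V ^ k) (uOp (b i)) = (V ^ k * uOp) (b i) from rfl, hVk_mul k]
    · rw [inner_conj_selfadj (hVsa.pow n)]
      congr 1 <;> rw [show (V ^ n) (uOp (b i)) = (V ^ n * uOp) (b i) from rfl, hVk_mul n]
  have hgeom : ∀ n : ℕ, ∑ k ∈ Finset.range n, (q^2)^k ≤ (1 - q^2)⁻¹ := by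
    intro n
    rw [← tsum_geometric_of_lt_one hq20 hq2]
    exact Summable.sum_le_tsum _ (fun i _ => by positivity) (summable_geometric_of_lt_one hq20 hq2)
  have hFn : ∀ (F : Finset ι) (n : ℕ),
      ∑ i ∈ F, (⟪uOp (b i), T (uOp (b i))⟫_ℂ).re
        ≤ (2 * ε * Dr) * (1 - q^2)⁻¹ + (F.card : ℝ) * (‖T‖ * (q^2) ^ n) := by
    intro F n
    rw [Finset.sum_congr rfl (fun i _ => hterm n i), Finset.sum_add_distrib]
    have hbound1 : ∑ i ∈ F, (∑ k ∈ Finset.range n,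
        (⟪Ck k (b i), (T - V*T*V) (Ck k (b i))⟫_ℂ).re) ≤ (2 * ε * Dr) * (1 - q^2)⁻¹ := by
      rw [Finset.sum_comm]
      calc ∑ k ∈ Finset.range n, ∑ i ∈ F, (⟪Ck k (b i), (T - V*T*V) (Ck k (b i))⟫_ℂ).re
          ≤ ∑ k ∈ Finset.range n, 2 * ε * (q ^ (2*k) * Dr) := by
            refine Finset.sum_le_sum fun k _ => ?_
            calc ∑ i ∈ F, (⟪Ck k (b i), (T - V*T*V) (Ck k (b i))⟫_ℂ).re
                ≤ ∑ i ∈ F, 2 * ε * ((⟪Ck k (b i), P (Ck k (b i))⟫_ℂ).re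
                    + (⟪Ck k (b i), N (Ck k (b i))⟫_ℂ).re) :=
                  Finset.sum_le_sum fun i _ => hW (Ck k (b i))
            _ = 2 * ε * (∑ i ∈ F, (⟪Ck k (b i), P (Ck k (b i))⟫_ℂ).re
                  + ∑ i ∈ F, (⟪Ck k (b i), N (Ck k (b i))⟫_ℂ).re) := by
                  rw [← Finset.mul_sum, Finset.sum_add_distrib]
            _ ≤ 2 * ε * (q ^ (2*k) * (traceVia b P).toReal
                  + q ^ (2*k) * (traceVia b N).toReal) := by
                  have h1 := hsum_conj P hP hfinP k F
                  have h2 := hsum_conj N hN hfinN k F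
                  nlinarith
            _ = 2 * ε * (q ^ (2*k) * Dr) := by rw [hDrdef]; ring
      _ = (2 * ε * Dr) * ∑ k ∈ Finset.range n, (q^2)^k := by
            rw [Finset.mul_sum]
            refine Finset.sum_congr rfl fun k _ => ?_
            rw [← pow_mul, mul_comm 2 k, pow_mul, ← pow_mul, mul_comm k 2]
            ring
      _ ≤ (2 * ε * Dr) * (1 - q^2)⁻¹ := by
            have h2 : 0 ≤ 2 * ε * Dr := by positivity
            exact mul_le_mul_of_nonneg_left (hgeom n) h2
    have hbound2 : ∑ i ∈ F, (⟪Ck n (b i), T (Ck n (b i))⟫_ℂ).re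
        ≤ (F.card : ℝ) * (‖T‖ * (q^2) ^ n) := by
      have hone : ∀ i : ι, ‖b i‖ = 1 := fun i => b.orthonormal.1 i
      have hterm2 : ∀ i : ι, (⟪Ck n (b i), T (Ck n (b i))⟫_ℂ).re ≤ ‖T‖ * (q^2) ^ n := by
        intro i
        have h1 : ‖Ck n (b i)‖ ≤ q ^ n := by
          calc ‖Ck n (b i)‖ ≤ ‖Ck n‖ * ‖b i‖ := (Ck n).le_opNorm _
          _ = ‖Ck n‖ := by rw [hone i, mul_one]
          _ ≤ q ^ n := hCk_norm n
        calc (⟪Ck n (b i), T (Ck n (b i))⟫_ℂ).re ≤ ‖⟪Ck n (b i), T (Ck n (b i))⟫_ℂ‖ :=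
              Complex.re_le_norm _
        _ ≤ ‖Ck n (b i)‖ * ‖T (Ck n (b i))‖ := norm_inner_le_norm _ _
        _ ≤ ‖Ck n (b i)‖ * (‖T‖ * ‖Ck n (b i)‖) :=
              mul_le_mul_of_nonneg_left (T.le_opNorm _) (norm_nonneg _)
        _ ≤ q ^ n * (‖T‖ * q ^ n) := by
              have h0 : (0:ℝ) ≤ ‖Ck n (b i)‖ := norm_nonneg _
              have hTn : (0:ℝ) ≤ ‖T‖ := norm_nonneg _
              have hqn : (0:ℝ) ≤ q ^ n := pow_nonneg hq0 n
              nlinarith [mul_le_mul h1 h1 h0 hqn]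
        _ = ‖T‖ * (q^2) ^ n := by rw [← pow_mul, mul_comm 2 n, pow_mul]; ring
      calc ∑ i ∈ F, (⟪Ck n (b i), T (Ck n (b i))⟫_ℂ).re
          ≤ ∑ _i ∈ F, ‖T‖ * (q^2) ^ n := Finset.sum_le_sum fun i _ => hterm2 i
      _ = (F.card : ℝ) * (‖T‖ * (q^2) ^ n) := by rw [Finset.sum_const, nsmul_eq_mul]
    exact add_le_add hbound1 hbound2
  -- pass to the limit in n
  have hFbound : ∀ F : Finset ι, ∑ i ∈ F, (⟪uOp (b i), T (uOp (b i))⟫_ℂ).re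
      ≤ (2 * ε * Dr) * (1 - q^2)⁻¹ := by
    intro F
    have hlim : Filter.Tendsto (fun n : ℕ => (2 * ε * Dr) * (1 - q^2)⁻¹
        + (F.card : ℝ) * (‖T‖ * (q^2) ^ n)) Filter.atTop
        (nhds ((2 * ε * Dr) * (1 - q^2)⁻¹ + (F.card : ℝ) * (‖T‖ * 0))) := by
      refine Filter.Tendsto.add tendsto_const_nhds (Filter.Tendsto.const_mul _ ?_)
      exact Filter.Tendsto.const_mul _ (tendsto_pow_atTop_nhds_zero_of_lt_one hq20 hq2)
    rw [mul_zero, mul_zero, add_zero] at hlim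
    exact ge_of_tendsto hlim (Filter.Eventually.of_forall fun n => hFn F n)
  -- conclude: the trace of u T u  is finite
  set Cm : ℝ := (2 * ε * Dr) * (1 - q^2)⁻¹ with hCmdef
  have hμle : traceVia b (star uOp * T * uOp) ≤ ENNReal.ofReal Cm := by
    rw [traceVia, ENNReal.tsum_eq_iSup_sum]
    refine iSup_le fun F => ?_
    have e : ∀ i : ι, (⟪b i, (star uOp * T * uOp) (b i)⟫_ℂ).re
        = (⟪uOp (b i), T (uOp (b i))⟫_ℂ).re := by
      intro i
      conv_lhs => rw [husa.star_eq]
      rw [inner_conj_selfadj husa]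
    calc ∑ i ∈ F, ENNReal.ofReal ((⟪b i, (star uOp * T * uOp) (b i)⟫_ℂ).re)
        = ENNReal.ofReal (∑ i ∈ F, (⟪b i, (star uOp * T * uOp) (b i)⟫_ℂ).re) :=
          (ENNReal.ofReal_sum_of_nonneg fun i _ =>
            reInner_nonneg (star_left_conjugate_nonneg hT uOp) _).symm
    _ ≤ ENNReal.ofReal Cm := by
          refine ENNReal.ofReal_le_ofReal ?_
          rw [Finset.sum_congr rfl (fun i _ => e i)]
          exact hFbound F
  have hμfin : traceVia b (star uOp * T * uOp) ≠ ⊤ :=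
    fun h => ENNReal.ofReal_ne_top (top_le_iff.mp (h ▸ hμle))
  -- Phase 2 : exact identity via polarization
  set g : ℝ → ℝ := fun t => t * u t ^ 2 with hgdef
  have hg0 : ∀ t, 0 ≤ g t := by
    intro t
    rcases le_or_gt t δ with h | h
    · simp [hgdef, hsupp t h]
    · have ht0 : 0 < t := lt_trans hδ h
      simp only [hgdef]; positivity
  have hgc : Continuous g := by fun_prop
  set sg : ℝ → ℝ := fun t => Real.sqrt (g t) with hsgdef
  have hsgc : Continuous sg := by fun_prop
  set sgOp := cfc sg S with hsgOpdef
  have hsgsa : IsSelfAdjoint sgOp := cfc_predicate sg S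
  set GOp := cfc g S with hGOpdef
  have hGpos : 0 ≤ GOp := cfc_nonneg (fun t _ => hg0 t)
  set vSq := cfc (fun t : ℝ => (t * u t)^2) S with hvSqdef
  have h_sg_mul : sgOp * sgOp = GOp := by
    rw [hsgOpdef, hGOpdef, ← cfc_mul _ _ S hsgc.continuousOn hsgc.continuousOn]
    exact cfc_congr fun t _ => Real.mul_self_sqrt (hg0 t)
  have hid : cfc (fun t : ℝ => t) S = S := cfc_id ℝ S hS
  have h_sgS : sgOp * S = cfc (fun t => sg t * t) S := by
    conv_lhs => rw [← hid]
    rw [hsgOpdef, ← cfc_mul sg (fun t : ℝ => t) S hsgc.continuousOn (by fun_prop)]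
  have h_sgSsg : sgOp * S * sgOp = vSq := by
    rw [h_sgS, hsgOpdef, ← cfc_mul _ _ S (by fun_prop) hsgc.continuousOn, hvSqdef]
    refine cfc_congr fun t _ => ?_
    have hss : sg t * sg t = g t := Real.mul_self_sqrt (hg0 t)
    calc sg t * t * sg t = t * (sg t * sg t) := by ring
    _ = t * (t * u t ^ 2) := by rw [hss]
    _ = (t * u t) ^ 2 := by ring
  have hvSq_le : vSq ≤ sgOp * T * sgOp := by
    have h := star_left_conjugate_le_conjugate hST sgOp
    rw [hsgsa.star_eq] at h
    rw [← h_sgSsg]; exact h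
  -- the conjugating elements (S±1)u
  have hSone : IsSelfAdjoint (S + 1) := hS.add (IsSelfAdjoint.one _)
  have hSmone : IsSelfAdjoint (S - 1) := hS.sub (IsSelfAdjoint.one _)
  have hone1 : cfc (fun _ : ℝ => (1:ℝ)) S = 1 := by
    rw [cfc_const 1 S]; exact map_one _
  have hplus : cfc (fun t : ℝ => t + 1) S = S + 1 := by
    rw [cfc_add (a := S) (fun t : ℝ => t) (fun _ : ℝ => 1) (by fun_prop) continuousOn_const,
      hid, hone1]
  have hminus : cfc (fun t : ℝ => t - 1) S = S - 1 := by
    rw [cfc_sub (fun t : ℝ => t) (fun _ : ℝ => 1) S (by fun_prop) continuousOn_const,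
      hid, hone1]
  set cp : ℝ → ℝ := fun t => (t + 1) * u t with hcpdef
  set cm : ℝ → ℝ := fun t => (t - 1) * u t with hcmdef
  have hcpc : Continuous cp := by fun_prop
  have hcmc : Continuous cm := by fun_prop
  set Cp := (S + 1) * uOp with hCpdef
  set Cm := (S - 1) * uOp with hCmdef
  have hCp : cfc cp S = Cp := by
    rw [hcpdef, cfc_mul (fun t : ℝ => t + 1) u S (by fun_prop) hu_cont.continuousOn, hplus]
  have hCm : cfc cm S = Cm := by
    rw [hcmdef, cfc_mul (fun t : ℝ => t - 1) u S (by fun_prop) hu_cont.continuousOn, hminus]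
  have hCpsa : star Cp = Cp := by rw [← hCp]; exact (cfc_predicate cp S).star_eq
  have hCmsa : star Cm = Cm := by rw [← hCm]; exact (cfc_predicate cm S).star_eq
  set wp : ℝ → ℝ := fun t => ((t + 1) * u t)^2 with hwpdef
  set wm : ℝ → ℝ := fun t => ((t - 1) * u t)^2 with hwmdef
  set wpOp := cfc wp S with hwpOpdef
  set wmOp := cfc wm S with hwmOpdef
  have hwm_pos : 0 ≤ wmOp := cfc_nonneg (fun t _ => by positivity)
  have hCp_mul : Cp * star Cp = wpOp := by
    rw [hCpsa, ← hCp, ← cfc_mul cp cp S hcpc.continuousOn hcpc.continuousOn, hwpOpdef]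
    exact cfc_congr fun t _ => by simp only [hwpdef]; ring
  have hCm_mul : Cm * star Cm = wmOp := by
    rw [hCmsa, ← hCm, ← cfc_mul cm cm S hcmc.continuousOn hcmc.continuousOn, hwmOpdef]
    exact cfc_congr fun t _ => by simp only [hwmdef]; ring
  -- the key algebraic identity
  have hkey2 : (S+1)*T*(S+1) + (N+N+N+N) = (S-1)*T*(S-1) + (P+P+P+P) := by
    have e1 : (S+1)*T*(S+1) = S*T*S + (S*T + T*S) + T := by noncomm_ring
    have e2 : (S-1)*T*(S-1) = S*T*S - (S*T + T*S) + T := by noncomm_ring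
    rw [e1, e2, hST2]; abel
  have hCpstar : star Cp = uOp * (S + 1) := by
    rw [hCpdef, star_mul, husa.star_eq, hSone.star_eq]
  have hCmstar : star Cm = uOp * (S - 1) := by
    rw [hCmdef, star_mul, husa.star_eq, hSmone.star_eq]
  have hkey3 : star Cp * T * Cp
        + (star uOp * N * uOp + star uOp * N * uOp + star uOp * N * uOp + star uOp * N * uOp)
      = star Cm * T * Cm
        + (star uOp * P * uOp + star uOp * P * uOp + star uOp * P * uOp + star uOp * P * uOp) := by
    calc star Cp * T * Cp + (star uOp * N * uOp + star uOp * N * uOp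
          + star uOp * N * uOp + star uOp * N * uOp)
        = uOp * ((S+1)*T*(S+1) + (N+N+N+N)) * uOp := by
          rw [hCpstar, hCpdef, husa.star_eq]; noncomm_ring
    _ = uOp * ((S-1)*T*(S-1) + (P+P+P+P)) * uOp := by rw [hkey2]
    _ = star Cm * T * Cm + (star uOp * P * uOp + star uOp * P * uOp
          + star uOp * P * uOp + star uOp * P * uOp) := by
          rw [hCmstar, hCmdef, husa.star_eq]; noncomm_ring
  have tr4 : ∀ (X Y : K →L[ℂ] K), 0 ≤ X → 0 ≤ Y →
      traceVia b (X + (Y + Y + Y + Y))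
        = traceVia b X + (traceVia b Y + traceVia b Y + traceVia b Y + traceVia b Y) := by
    intro X Y hX hY
    have h2 : 0 ≤ Y + Y := add_nonneg hY hY
    have h3 : 0 ≤ Y + Y + Y := add_nonneg h2 hY
    have h4 : 0 ≤ Y + Y + Y + Y := add_nonneg h3 hY
    rw [traceVia_add b hX h4, traceVia_add b h3 hY, traceVia_add b h2 hY,
      traceVia_add b hY hY]
  have posuN : 0 ≤ star uOp * N * uOp := star_left_conjugate_nonneg hN uOp
  have posuP : 0 ≤ star uOp * P * uOp := star_left_conjugate_nonneg hP uOp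
  have posTp : 0 ≤ star Cp * T * Cp := star_left_conjugate_nonneg hT Cp
  have posTm : 0 ≤ star Cm * T * Cm := star_left_conjugate_nonneg hT Cm
  set tp := traceVia b (star uOp * P * uOp) with htpdef
  set tn := traceVia b (star uOp * N * uOp) with htndef
  have trEq : traceVia b (star Cp * T * Cp) + (tn + tn + tn + tn)
      = traceVia b (star Cm * T * Cm) + (tp + tp + tp + tp) := by
    have h := congrArg (traceVia b) hkey3
    rw [tr4 _ _ posTp posuN, tr4 _ _ posTm posuP] at h
    exact h
  have trP_swap : traceVia b (star Cp * T * Cp)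
      = traceVia b (CFC.sqrt T * wpOp * CFC.sqrt T) := by
    rw [traceVia_sandwich b hT Cp, hCp_mul]
  have trM_swap : traceVia b (star Cm * T * Cm)
      = traceVia b (CFC.sqrt T * wmOp * CFC.sqrt T) := by
    rw [traceVia_sandwich b hT Cm, hCm_mul]
  have hwsplit : wpOp = wmOp + (GOp + GOp + GOp + GOp) := by
    have e : wpOp = cfc (fun t => wm t + (g t + g t + g t + g t)) S := by
      rw [hwpOpdef]
      refine cfc_congr fun t _ => ?_
      simp only [hwpdef, hwmdef, hgdef]
      ring
    rw [e, cfc_add (a := S) wm (fun t => g t + g t + g t + g t) (by fun_prop) (by fun_prop),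
      cfc_add (a := S) (fun t => g t + g t + g t) g (by fun_prop) hgc.continuousOn,
      cfc_add (a := S) (fun t => g t + g t) g (by fun_prop) hgc.continuousOn,
      cfc_add (a := S) g g hgc.continuousOn hgc.continuousOn, hwmOpdef, hGOpdef]
  have hsqrtsa : IsSelfAdjoint (CFC.sqrt T) := IsSelfAdjoint.of_nonneg (CFC.sqrt_nonneg T)
  have posSwm : 0 ≤ CFC.sqrt T * wmOp * CFC.sqrt T := by
    have := star_left_conjugate_nonneg hwm_pos (CFC.sqrt T)
    rwa [hsqrtsa.star_eq] at this
  have hG0 : (0 : K →L[ℂ] K) ≤ GOp := hGpos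
  have posSG : 0 ≤ CFC.sqrt T * GOp * CFC.sqrt T := by
    have := star_left_conjugate_nonneg hG0 (CFC.sqrt T)
    rwa [hsqrtsa.star_eq] at this
  set J := traceVia b (CFC.sqrt T * GOp * CFC.sqrt T) with hJdef
  have trsplit : traceVia b (CFC.sqrt T * wpOp * CFC.sqrt T)
      = traceVia b (CFC.sqrt T * wmOp * CFC.sqrt T) + (J + J + J + J) := by
    have e : CFC.sqrt T * wpOp * CFC.sqrt T
        = CFC.sqrt T * wmOp * CFC.sqrt T
          + (CFC.sqrt T * GOp * CFC.sqrt T + CFC.sqrt T * GOp * CFC.sqrt T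
            + CFC.sqrt T * GOp * CFC.sqrt T + CFC.sqrt T * GOp * CFC.sqrt T) := by
      rw [hwsplit]; noncomm_ring
    rw [e, tr4 _ _ posSwm posSG]
  have hwm_le : wmOp ≤ cfc (fun t => (M+1)^2 * (u t * u t)) S := by
    refine cfc_mono (fun t ht => ?_) (by fun_prop) (by fun_prop)
    have habs : |t| ≤ M := hspec t ht
    have h1 : (t - 1)^2 ≤ (M + 1)^2 := by
      have := abs_le.mp habs
      nlinarith [this.1, this.2]
    have h2 : (0:ℝ) ≤ u t * u t := mul_nonneg (hu0 t) (hu0 t)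
    calc wm t = (t-1)^2 * (u t * u t) := by simp only [hwmdef]; ring
    _ ≤ (M+1)^2 * (u t * u t) := mul_le_mul_of_nonneg_right h1 h2
  have hKsplit : cfc (fun t => (M+1)^2 * (u t * u t)) S = ((M+1)^2 : ℝ) • (uOp * uOp) := by
    have e : (fun t => (M+1)^2 * (u t * u t)) = fun t => ((M+1)^2 : ℝ) • (u t * u t) := rfl
    rw [e, cfc_smul ((M+1)^2 : ℝ) (fun t => u t * u t) S (by fun_prop),
      cfc_mul u u S hu_cont.continuousOn hu_cont.continuousOn]
  have hμ_eq : traceVia b (CFC.sqrt T * (uOp * uOp) * CFC.sqrt T)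
      = traceVia b (star uOp * T * uOp) := by
    rw [traceVia_sandwich b hT uOp, husa.star_eq]
  have hwmT_le : traceVia b (CFC.sqrt T * wmOp * CFC.sqrt T)
      ≤ ENNReal.ofReal ((M+1)^2) * traceVia b (star uOp * T * uOp) := by
    have hle1 : CFC.sqrt T * wmOp * CFC.sqrt T
        ≤ CFC.sqrt T * (((M+1)^2 : ℝ) • (uOp * uOp)) * CFC.sqrt T := by
      have := star_left_conjugate_le_conjugate (hKsplit ▸ hwm_le) (CFC.sqrt T)
      rwa [hsqrtsa.star_eq] at this
    refine (traceVia_mono b hle1).trans ?_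
    have e2 : CFC.sqrt T * (((M+1)^2 : ℝ) • (uOp * uOp)) * CFC.sqrt T
        = ((M+1)^2 : ℝ) • (CFC.sqrt T * (uOp * uOp) * CFC.sqrt T) := by
      rw [mul_smul_comm, smul_mul_assoc]
    rw [e2, traceVia_smul b (by positivity), hμ_eq]
  have hfinwm : traceVia b (CFC.sqrt T * wmOp * CFC.sqrt T) ≠ ⊤ := by
    intro htop
    have hh := hwmT_le.trans (mul_le_mul_right hμle _)
    rw [htop] at hh
    exact ENNReal.mul_ne_top ENNReal.ofReal_ne_top ENNReal.ofReal_ne_top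
      (top_le_iff.mp hh)
  have hu_sq : ‖uOp‖^2 ≤ (1:ℝ) := by nlinarith [norm_nonneg uOp]
  have htp_le : tp ≤ traceVia b P := by
    refine (traceVia_conj_le b hP uOp).trans ?_
    calc ENNReal.ofReal (‖uOp‖^2) * traceVia b P ≤ 1 * traceVia b P := by
          refine mul_le_mul_left ?_ _
          rw [← ENNReal.ofReal_one]
          exact ENNReal.ofReal_le_ofReal hu_sq
    _ = traceVia b P := one_mul _
  have htn_le : tn ≤ traceVia b N := by
    refine (traceVia_conj_le b hN uOp).trans ?_
    calc ENNReal.ofReal (‖uOp‖^2) * traceVia b N ≤ 1 * traceVia b N := by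
          refine mul_le_mul_left ?_ _
          rw [← ENNReal.ofReal_one]
          exact ENNReal.ofReal_le_ofReal hu_sq
    _ = traceVia b N := one_mul _
  have htpfin : tp ≠ ⊤ := fun h => hfinP (top_le_iff.mp (h ▸ htp_le))
  have htnfin : tn ≠ ⊤ := fun h => hfinN (top_le_iff.mp (h ▸ htn_le))
  have hEq2 : (J + J + J + J) + (tn + tn + tn + tn) = tp + tp + tp + tp := by
    have E : traceVia b (CFC.sqrt T * wmOp * CFC.sqrt T)
          + ((J + J + J + J) + (tn + tn + tn + tn))
        = traceVia b (CFC.sqrt T * wmOp * CFC.sqrt T) + (tp + tp + tp + tp) := by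
      rw [← add_assoc]
      calc traceVia b (CFC.sqrt T * wmOp * CFC.sqrt T) + (J + J + J + J) + (tn+tn+tn+tn)
          = traceVia b (CFC.sqrt T * wpOp * CFC.sqrt T) + (tn+tn+tn+tn) := by rw [trsplit]
      _ = traceVia b (star Cp * T * Cp) + (tn+tn+tn+tn) := by rw [trP_swap]
      _ = traceVia b (star Cm * T * Cm) + (tp+tp+tp+tp) := trEq
      _ = traceVia b (CFC.sqrt T * wmOp * CFC.sqrt T) + (tp+tp+tp+tp) := by rw [trM_swap]
    exact (ENNReal.add_right_inj hfinwm).mp E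
  have hJle : J ≤ tp := by
    by_contra hlt
    push_neg at hlt
    have h1 : tp + tp < J + J := ENNReal.add_lt_add hlt hlt
    have h4 : tp + tp + tp + tp < J + J + J + J := by
      have := ENNReal.add_lt_add h1 h1
      calc tp + tp + tp + tp = (tp + tp) + (tp + tp) := by ring
      _ < (J + J) + (J + J) := this
      _ = J + J + J + J := by ring
    have hcontr : tp + tp + tp + tp < tp + tp + tp + tp := by
      calc tp + tp + tp + tp < J + J + J + J := h4
      _ ≤ (J + J + J + J) + (tn + tn + tn + tn) := le_self_add
      _ = tp + tp + tp + tp := hEq2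
    exact lt_irrefl _ hcontr
  have hfinal1 : traceVia b vSq ≤ J := by
    refine (traceVia_mono b hvSq_le).trans (le_of_eq ?_)
    have e : sgOp * T * sgOp = star sgOp * T * sgOp := by rw [hsgsa.star_eq]
    rw [e, traceVia_sandwich b hT sgOp, hsgsa.star_eq, h_sg_mul]
  exact (hfinal1.trans hJle).trans htp_le




end PS
end Helpers

open PS

/-- For bounded positive operators `A, B` on a complex Hilbert space,
`‖A^{1/2} - B^{1/2}‖₂² ≤ ‖A - B‖₁`, where `sA, sB` are the positive square roots of
`A, B`, and `D = |A - B|` is the positive operator with `D² = (A-B)*(A-B)`, so that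
`traceVia b' D` is the trace norm of `A - B`. -/
theorem stmt0 {K : Type*} [NormedAddCommGroup K] [InnerProductSpace ℂ K] [CompleteSpace K]
    (A B sA sB D : K →L[ℂ] K)
    (hA : A.IsPositive) (hB : B.IsPositive)
    (hsA : sA.IsPositive ∧ sA * sA = A)
    (hsB : sB.IsPositive ∧ sB * sB = B)
    (hD : D.IsPositive ∧ D * D = star (A - B) * (A - B))
    (ι ι' : Type*) (b : HilbertBasis ι ℂ K) (b' : HilbertBasis ι' ℂ K) :
    hsNormSq b (sA - sB) ≤ traceVia b' D := by
  obtain ⟨hsA1, hsA2⟩ := hsA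
  obtain ⟨hsB1, hsB2⟩ := hsB
  obtain ⟨hD1, hD2⟩ := hD
  set S := sA - sB with hSdef
  set T := sA + sB with hTdef
  have hsAsa : IsSelfAdjoint sA := hsA1.isSelfAdjoint
  have hsBsa : IsSelfAdjoint sB := hsB1.isSelfAdjoint
  have hS : IsSelfAdjoint S := hsAsa.sub hsBsa
  have hXsa : IsSelfAdjoint (A - B) := (hA.isSelfAdjoint).sub (hB.isSelfAdjoint)
  have hsApos : 0 ≤ sA := (ContinuousLinearMap.nonneg_iff_isPositive sA).mpr hsA1
  have hsBpos : 0 ≤ sB := (ContinuousLinearMap.nonneg_iff_isPositive sB).mpr hsB1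
  have hDpos : 0 ≤ D := (ContinuousLinearMap.nonneg_iff_isPositive D).mpr hD1
  have hT0 : 0 ≤ T := add_nonneg hsApos hsBpos
  have hST : S ≤ T := by
    rw [← sub_nonneg]
    have e : T - S = sB + sB := by rw [hSdef, hTdef]; abel
    rw [e]; exact add_nonneg hsBpos hsBpos
  have hSTneg : -S ≤ T := by
    rw [← sub_nonneg]
    have e : T - (-S) = sA + sA := by rw [hSdef, hTdef]; abel
    rw [e]; exact add_nonneg hsApos hsApos
  set P := (A - B)⁺ with hPdef
  set N := (A - B)⁻ with hNdef
  have hPpos : 0 ≤ P := CFC.posPart_nonneg _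
  have hNpos : 0 ≤ N := CFC.negPart_nonneg _
  have hPN : P - N = A - B := CFC.posPart_sub_negPart _ hXsa
  have hPNmul : (P + N) * (P + N) = (A - B) * (A - B) := by
    have h1 : P * N = 0 := CFC.posPart_mul_negPart _
    have h2 : N * P = 0 := CFC.negPart_mul_posPart _
    have h3 : (P - N) * (P - N) = (A - B) * (A - B) := by rw [hPN]
    calc (P+N)*(P+N) = (P-N)*(P-N) + ((P*N + P*N) + (N*P + N*P)) := by noncomm_ring
    _ = (A - B) * (A - B) := by rw [h1, h2, h3]; simp
  have hD_eq : D = P + N := by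
    have h1 : D * D = (A - B) * (A - B) := by rw [hD2, hXsa.star_eq]
    calc D = CFC.sqrt (D * D) := (CFC.sqrt_mul_self D hDpos).symm
    _ = CFC.sqrt ((P + N) * (P + N)) := by rw [h1, ← hPNmul]
    _ = P + N := CFC.sqrt_mul_self _ (add_nonneg hPpos hNpos)
  have htrD : traceVia b' D = traceVia b P + traceVia b N := by
    rw [traceVia_basis hDpos b' b, hD_eq, traceVia_add b hPpos hNpos]
  have hLHS : hsNormSq b S = traceVia b (S * S) := by
    rw [← traceVia_star_mul_self b S, hS.star_eq]
  by_cases hfinP : traceVia b P = ⊤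
  · rw [htrD, hfinP, top_add]; exact le_top
  by_cases hfinN : traceVia b N = ⊤
  · rw [htrD, hfinN, add_top]; exact le_top
  -- the two operator identities
  have hST_eq : S * T + T * S = (A - B) + (A - B) := by
    rw [hSdef, hTdef]
    have e : (sA - sB) * (sA + sB) + (sA + sB) * (sA - sB)
        = (sA * sA + sA * sA) - (sB * sB + sB * sB) := by noncomm_ring
    rw [e, hsA2, hsB2]; abel
  have hX1 : S * T + T * S + N + N = P + P := by
    rw [hST_eq, ← hPN]; abel
  have hX2 : (-S) * T + T * (-S) + P + P = N + N := by
    have e : (-S) * T + T * (-S) = -(S * T + T * S) := by noncomm_ring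
    rw [e, hST_eq, ← hPN]; abel
  -- the cutoff family
  set un : ℕ → ℝ → ℝ := fun n t => min 1 (max 0 ((n+1) * t - 1)) with hundef
  have hunc : ∀ n, Continuous (un n) := fun n => by
    simp only [hundef]; fun_prop
  have hun0 : ∀ n t, 0 ≤ un n t := fun n t => le_min zero_le_one (le_max_left _ _)
  have hun1 : ∀ n t, un n t ≤ 1 := fun n t => min_le_left _ _
  have hδpos : ∀ n : ℕ, (0:ℝ) < 1 / (n+1) := fun n => by positivity
  have hδle1 : ∀ n : ℕ, (1:ℝ) / (n+1) ≤ 1 := fun n => by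
    rw [div_le_one (by positivity)]
    have : (0:ℝ) ≤ (n:ℝ) := Nat.cast_nonneg n
    linarith
  have hsupp : ∀ n : ℕ, ∀ t : ℝ, t ≤ 1 / (n+1) → un n t = 0 := by
    intro n t ht
    have hn : (0:ℝ) < (n:ℝ) + 1 := by positivity
    have h1 : ((n:ℝ)+1) * t - 1 ≤ 0 := by
      have := (le_div_iff₀ hn).mp ht
      nlinarith
    simp only [hundef]
    rw [max_eq_left h1, min_eq_right zero_le_one]
  have hun_one : ∀ (n : ℕ) (t : ℝ), 2/((n:ℝ)+1) ≤ t → un n t = 1 := by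
    intro n t h
    have hn : (0:ℝ) < (n:ℝ)+1 := by positivity
    have h1 : (1:ℝ) ≤ ((n:ℝ)+1) * t - 1 := by
      rw [div_le_iff₀ hn] at h; nlinarith
    simp only [hundef]
    rw [max_eq_right (by linarith), min_eq_left h1]
  have sq_mono : ∀ (t a c : ℝ), 0 ≤ a → a ≤ c → (t * a)^2 ≤ (t * c)^2 := by
    intro t a c ha hac
    have h1 : a^2 ≤ c^2 := by nlinarith
    calc (t*a)^2 = t^2 * a^2 := by ring
    _ ≤ t^2 * c^2 := mul_le_mul_of_nonneg_left h1 (sq_nonneg t)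
    _ = (t*c)^2 := by ring
  have hun_mono : ∀ (n : ℕ) (t : ℝ), un n t ≤ un (n+1) t := by
    intro n t
    rcases le_or_gt t 0 with h | h
    · rw [hsupp n t (le_trans h (le_of_lt (hδpos n)))]
      exact hun0 (n+1) t
    · simp only [hundef]
      refine min_le_min le_rfl (max_le_max le_rfl ?_)
      have : ((n:ℝ)+1) * t ≤ ((n:ℝ)+1+1) * t := by nlinarith
      push_cast
      linarith
  -- the two cfc families
  have hvsc : ∀ n : ℕ, Continuous (fun t : ℝ => (t * un n t)^2) :=
    fun n => (continuous_id.mul (hunc n)).pow 2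
  have hvtc : ∀ n : ℕ, Continuous (fun t : ℝ => (t * un n (-t))^2) :=
    fun n => (continuous_id.mul ((hunc n).comp continuous_neg)).pow 2
  set vs : ℕ → (K →L[ℂ] K) := fun n => cfc (fun t : ℝ => (t * un n t)^2) S with hvs
  set vt : ℕ → (K →L[ℂ] K) := fun n => cfc (fun t : ℝ => (t * un n (-t))^2) S with hvt
  have hvspos : ∀ n, 0 ≤ vs n := fun n => cfc_nonneg fun t _ => by positivity
  have hvtpos : ∀ n, 0 ≤ vt n := fun n => cfc_nonneg fun t _ => by positivity
  set Rn : ℕ → (K →L[ℂ] K) := fun n => vs n + vt n with hRn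
  have hmono : ∀ n, Rn n ≤ Rn (n+1) := by
    intro n
    refine add_le_add ?_ ?_
    · exact cfc_mono (fun t _ => sq_mono t _ _ (hun0 n t) (hun_mono n t))
        (hvsc n).continuousOn (hvsc (n+1)).continuousOn
    · exact cfc_mono (fun t _ => sq_mono t _ _ (hun0 n (-t)) (hun_mono n (-t)))
        (hvtc n).continuousOn (hvtc (n+1)).continuousOn
  -- convergence
  have hid : cfc (fun t : ℝ => t) S = S := cfc_id ℝ S hS
  have hSS : S * S = cfc (fun t : ℝ => t * t) S := by
    rw [cfc_mul (fun t : ℝ => t) (fun t : ℝ => t) S (by fun_prop) (by fun_prop), hid]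
  have hpt : ∀ (n : ℕ) (t : ℝ), |t * t - ((t * un n t)^2 + (t * un n (-t))^2)|
      ≤ 4 * (1/((n:ℝ)+1))^2 := by
    intro n t
    have hn : (0:ℝ) < (n:ℝ)+1 := by positivity
    have hδ0 : (0:ℝ) < 1/((n:ℝ)+1) := by positivity
    have h2δ : 2/((n:ℝ)+1) = 2 * (1/((n:ℝ)+1)) := by ring
    rcases le_or_gt t (-(2 * (1/((n:ℝ)+1)))) with h1 | h1
    · have e1 : un n t = 0 := hsupp n t (by nlinarith)
      have e2 : un n (-t) = 1 := hun_one n (-t) (by rw [h2δ]; linarith)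
      rw [e1, e2]
      have e3 : t * t - ((t * 0)^2 + (t * 1)^2) = 0 := by ring
      rw [e3, abs_zero]; positivity
    rcases le_or_gt (2 * (1/((n:ℝ)+1))) t with h2 | h2
    · have e1 : un n t = 1 := hun_one n t (by rw [h2δ]; linarith)
      have e2 : un n (-t) = 0 := hsupp n (-t) (by nlinarith)
      rw [e1, e2]
      have e3 : t * t - ((t * 1)^2 + (t * 0)^2) = 0 := by ring
      rw [e3, abs_zero]; positivity
    · have hb : t^2 ≤ (2 * (1/((n:ℝ)+1)))^2 := by nlinarith
      have hfle : (t * un n t)^2 + (t * un n (-t))^2 ≤ t * t := by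
        rcases le_or_gt t 0 with h3 | h3
        · have e1 : un n t = 0 := hsupp n t (by linarith)
          rw [e1]
          have h4 : (t * un n (-t))^2 ≤ (t * 1)^2 :=
            sq_mono t _ _ (hun0 n (-t)) (hun1 n (-t))
          nlinarith
        · have e2 : un n (-t) = 0 := hsupp n (-t) (by linarith)
          rw [e2]
          have h4 : (t * un n t)^2 ≤ (t * 1)^2 :=
            sq_mono t _ _ (hun0 n t) (hun1 n t)
          nlinarith
      have hf0 : 0 ≤ (t * un n t)^2 + (t * un n (-t))^2 := by positivity
      rw [abs_of_nonneg (by linarith)]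
      nlinarith
  have hnormdiff : ∀ n : ℕ, ‖S * S - Rn n‖ ≤ 4 * (1/((n:ℝ)+1))^2 := by
    intro n
    have e : S * S - Rn n
        = cfc (fun t : ℝ => t * t - ((t * un n t)^2 + (t * un n (-t))^2)) S := by
      rw [hSS, hRn, hvs, hvt]
      rw [cfc_sub (fun t : ℝ => t * t)
          (fun t : ℝ => (t * un n t)^2 + (t * un n (-t))^2) S (by fun_prop)
          ((hvsc n).add (hvtc n)).continuousOn,
        cfc_add (a := S) _ _ (hvsc n).continuousOn (hvtc n).continuousOn]
    rw [e]
    refine norm_cfc_le (by positivity) fun t _ => ?_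
    rw [Real.norm_eq_abs]
    exact hpt n t
  have habsre : ∀ z : ℂ, |z.re| ≤ ‖z‖ := fun z => Complex.abs_re_le_norm z
  have hconv : ∀ x : K, Filter.Tendsto (fun n => (⟪x, (Rn n) x⟫_ℂ).re) Filter.atTop
      (nhds ((⟪x, (S * S) x⟫_ℂ).re)) := by
    intro x
    rw [tendsto_iff_dist_tendsto_zero]
    have hbnd : ∀ n : ℕ, dist ((⟪x, (Rn n) x⟫_ℂ).re) ((⟪x, (S * S) x⟫_ℂ).re)
        ≤ (4 * ‖x‖^2) * (1/((n:ℝ)+1))^2 := by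
      intro n
      have hdiff : (⟪x, (Rn n) x⟫_ℂ).re - (⟪x, (S * S) x⟫_ℂ).re
          = -((⟪x, ((S * S) - Rn n) x⟫_ℂ).re) := by
        rw [ContinuousLinearMap.sub_apply, inner_sub_right]
        simp only [Complex.sub_re]
        ring
      rw [Real.dist_eq, hdiff, abs_neg]
      calc |(⟪x, ((S * S) - Rn n) x⟫_ℂ).re| ≤ ‖⟪x, ((S * S) - Rn n) x⟫_ℂ‖ := habsre _
      _ ≤ ‖x‖ * ‖((S * S) - Rn n) x‖ := norm_inner_le_norm _ _
      _ ≤ ‖x‖ * (‖(S * S) - Rn n‖ * ‖x‖) :=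
          mul_le_mul_of_nonneg_left ((S * S - Rn n).le_opNorm x) (norm_nonneg x)
      _ ≤ ‖x‖ * ((4 * (1/((n:ℝ)+1))^2) * ‖x‖) := by
          have h1 := hnormdiff n
          have h2 : (0:ℝ) ≤ ‖x‖ := norm_nonneg x
          exact mul_le_mul_of_nonneg_left (mul_le_mul_of_nonneg_right h1 h2) h2
      _ = (4 * ‖x‖^2) * (1/((n:ℝ)+1))^2 := by ring
    refine squeeze_zero (fun n => dist_nonneg) hbnd ?_
    have h1 : Filter.Tendsto (fun n : ℕ => 1/((n:ℝ)+1)) Filter.atTop (nhds 0) :=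
      tendsto_one_div_add_atTop_nhds_zero_nat
    have h2 : Filter.Tendsto (fun n : ℕ => (4 * ‖x‖^2) * (1/((n:ℝ)+1))^2)
        Filter.atTop (nhds ((4 * ‖x‖^2) * 0^2)) := by
      exact ((h1.pow 2).const_mul _)
    simpa using h2
  -- put everything together
  rw [hLHS, htrD]
  refine le_trans (le_iSup_traceVia b hmono hconv) (iSup_le fun n => ?_)
  refine le_trans (le_of_eq (traceVia_add b (hvspos n) (hvtpos n))) (add_le_add ?_ ?_)
  · exact main_ineq b S T P N hS hT0 hST hPpos hNpos hX1 hfinP hfinN (un n) (hunc n)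
      (hun0 n) (hun1 n) (hδpos n) (hδle1 n) (hsupp n)
  · have hSneg : IsSelfAdjoint (-S) := hS.neg
    have hcomp : vt n = cfc (fun t : ℝ => (t * un n t)^2) (-S) := by
      simp only [hvt]
      have e1 : cfc (fun t : ℝ => (t * un n (-t))^2) S
          = cfc (fun t : ℝ => ((-t) * un n (-t))^2) S :=
        cfc_congr fun t _ => by ring
      rw [e1, cfc_comp_neg (fun t : ℝ => (t * un n t)^2) S
        (by exact ((hvsc n).continuousOn.mono (Set.subset_univ _))) hS]
    rw [hcomp]
    exact main_ineq b (-S) T N P hSneg hT0 hSTneg hNpos hPpos hX2 hfinN hfinP (un n)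
      (hunc n) (hun0 n) (hun1 n) (hδpos n) (hδle1 n) (hsupp n)
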